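/- arXiv:0902.0196 — 2 statements merged into one kernel-verified Lean document; each statement's English description precedes it below -/
import Mathlib

section
/- Let f ∈ L¹(G), let D_σ, D_δ, D_{α₁}, …, D_{α_k} be unitary representations of G, and let C be a unitary matrix such that D_σ(g) ⊗ D_δ(g) = C (D_{α₁}(g) ⊕ ⋯ ⊕ D_{α_k}(g)) C† for all g ∈ G. Then the bispectrum satisfies A_{3,f}(D_σ, D_δ) = (F_f(D_σ) ⊗ F_f(D_δ)) · C · (F_f(D_{α₁})† ⊕ ⋯ ⊕ F_f(D_{α_k})†) · C†. -/
set_option linter.unusedSectionVars false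
set_option maxHeartbeats 1000000


open MeasureTheory Matrix Filter Topology
open scoped Kronecker BoundedContinuousFunction ENNReal

/-- A (finite-dimensional, continuous) unitary representation of a topological group `G`
of dimension `n`: a continuous homomorphism into the `n × n` unitary matrices. -/
structure UnitaryRep (G : Type) [Group G] [TopologicalSpace G] (n : ℕ) : Type where
  toFun : G → Matrix (Fin n) (Fin n) ℂ
  continuous_toFun : Continuous toFun
  map_one' : toFun 1 = 1
  map_mul' : ∀ g h : G, toFun (g * h) = toFun g * toFun h
  unitary' : ∀ g : G, toFun g ∈ Matrix.unitaryGroup (Fin n) ℂ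

namespace UnitaryRep

variable {G : Type} [Group G] [TopologicalSpace G]

/-- Irreducibility: the only invariant subspaces are `⊥` and `⊤`. -/
def Irreducible {n : ℕ} (D : UnitaryRep G n) : Prop :=
  ∀ W : Submodule ℂ (Fin n → ℂ),
    (∀ g : G, ∀ v ∈ W, (D.toFun g).mulVec v ∈ W) → W = ⊥ ∨ W = ⊤

end UnitaryRep

/-- Equivalence of unitary representations via a fixed unitary intertwiner. -/
def RepEquiv {G : Type} [Group G] [TopologicalSpace G] {n m : ℕ}
    (D₁ : UnitaryRep G n) (D₂ : UnitaryRep G m) : Prop :=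
  ∃ C : Matrix (Fin n) (Fin m) ℂ, C * Cᴴ = 1 ∧ Cᴴ * C = 1 ∧
    ∀ g : G, D₁.toFun g = C * D₂.toFun g * Cᴴ

/-- The Fourier coefficient `F_f(D) = ∫_G f(g) D(g)† dg`. -/
noncomputable def repFourierCoeff {G : Type} [Group G] [TopologicalSpace G] [MeasurableSpace G]
    (μ : Measure G) (f : G → ℂ) {n : ℕ} (D : UnitaryRep G n) :
    Matrix (Fin n) (Fin n) ℂ :=
  Matrix.of fun i j => ∫ g, f g * (D.toFun g)ᴴ i j ∂μ

/-- The triple correlation `a_{3,f}(g₁,g₂) = ∫_G conj (f g) f (g g₁) f (g g₂) dg`. -/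
noncomputable def tripleCorr {G : Type} [Group G] [TopologicalSpace G] [MeasurableSpace G]
    (μ : Measure G) (f : G → ℂ) : G × G → ℂ :=
  fun p => ∫ g, (starRingEnd ℂ) (f g) * f (g * p.1) * f (g * p.2) ∂μ

/-- The bispectrum `A_{3,f}(D₁,D₂) = ∫∫ a_{3,f}(g₁,g₂) (D₁(g₁)† ⊗ D₂(g₂)†) dg₁ dg₂`. -/
noncomputable def bispectrum {G : Type} [Group G] [TopologicalSpace G] [MeasurableSpace G]
    (μ : Measure G) (f : G → ℂ) {n₁ n₂ : ℕ}
    (D₁ : UnitaryRep G n₁) (D₂ : UnitaryRep G n₂) :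
    Matrix (Fin n₁ × Fin n₂) (Fin n₁ × Fin n₂) ℂ :=
  Matrix.of fun p q =>
    ∫ g₁, ∫ g₂, tripleCorr μ f (g₁, g₂) * ((D₁.toFun g₁)ᴴ ⊗ₖ (D₂.toFun g₂)ᴴ) p q ∂μ ∂μ

/-- `P_D = ∫_H D(h) dh`, the projection associated to a closed subgroup `H` (with Haar
probability measure `ν`) and a unitary representation `D` of `G`. -/
noncomputable def subgroupProj {G : Type} [Group G] [TopologicalSpace G] [MeasurableSpace G]
    {H : Subgroup G} (ν : Measure ↥H) {n : ℕ} (D : UnitaryRep G n) :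
    Matrix (Fin n) (Fin n) ℂ :=
  Matrix.of fun i j => ∫ h : ↥H, D.toFun (h : G) i j ∂ν

section Aux

variable {G : Type} [Group G] [TopologicalSpace G]

namespace UnitaryRep

lemma entry_continuous {n : ℕ} (D : UnitaryRep G n) (i j : Fin n) :
    Continuous fun g => D.toFun g i j := by
  have h1 : Continuous fun M : Matrix (Fin n) (Fin n) ℂ => M i j :=
    (continuous_apply j).comp (continuous_apply i)
  exact h1.comp D.continuous_toFun

lemma mul_star_self {n : ℕ} (D : UnitaryRep G n) (g : G) :
    D.toFun g * (D.toFun g)ᴴ = 1 := by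
  have := (Unitary.mem_iff.mp (D.unitary' g)).2
  simpa [Matrix.star_eq_conjTranspose] using this

lemma star_mul_self {n : ℕ} (D : UnitaryRep G n) (g : G) :
    (D.toFun g)ᴴ * D.toFun g = 1 := by
  have := (Unitary.mem_iff.mp (D.unitary' g)).1
  simpa [Matrix.star_eq_conjTranspose] using this

lemma toFun_inv {n : ℕ} (D : UnitaryRep G n) (g : G) :
    D.toFun g⁻¹ = (D.toFun g)ᴴ := by
  have h1 : D.toFun g⁻¹ * D.toFun g = 1 := by
    rw [← D.map_mul', inv_mul_cancel, D.map_one']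
  calc D.toFun g⁻¹ = D.toFun g⁻¹ * (D.toFun g * (D.toFun g)ᴴ) := by
        rw [D.mul_star_self, mul_one]
    _ = (D.toFun g⁻¹ * D.toFun g) * (D.toFun g)ᴴ := by rw [mul_assoc]
    _ = (D.toFun g)ᴴ := by rw [h1, one_mul]

lemma norm_entry_le_one {n : ℕ} (D : UnitaryRep G n) (g : G) (i j : Fin n) :
    ‖D.toFun g i j‖ ≤ 1 := by
  have h := D.mul_star_self g
  have h1 : (D.toFun g * (D.toFun g)ᴴ) i i = 1 := by rw [h]; simp
  rw [Matrix.mul_apply] at h1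
  have h2 : ∀ l, (D.toFun g i l) * (D.toFun g)ᴴ l i = (Complex.normSq (D.toFun g i l) : ℂ) := by
    intro l
    rw [Matrix.conjTranspose_apply, Complex.star_def, Complex.mul_conj]
  rw [Finset.sum_congr rfl fun l _ => h2 l] at h1
  have h3 : (∑ l, Complex.normSq (D.toFun g i l)) = 1 := by
    have := congrArg Complex.re h1
    simpa using this
  have h4 : Complex.normSq (D.toFun g i j) ≤ 1 := by
    rw [← h3]
    exact Finset.single_le_sum (fun l _ => Complex.normSq_nonneg _) (Finset.mem_univ j)
  have h5 : ‖D.toFun g i j‖ ^ 2 ≤ 1 := by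
    rw [← Complex.normSq_eq_norm_sq]; exact h4
  nlinarith [norm_nonneg (D.toFun g i j)]

end UnitaryRep

variable [MeasurableSpace G] [BorelSpace G] [IsTopologicalGroup G]
variable {μ : Measure G}

/-- Integrability of an integrable function times a bounded continuous one. -/
lemma integrable_mul_bdd {f : G → ℂ} (hf : Integrable f μ) {φ : G → ℂ}
    (hφc : Continuous φ) (hφb : ∀ g, ‖φ g‖ ≤ 1) :
    Integrable (fun g => f g * φ g) μ := by
  have := hf.bdd_mul (c := 1) hφc.aestronglyMeasurable (Eventually.of_forall hφb)
  exact this.congr (Eventually.of_forall fun x => mul_comm _ _)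

lemma MeasureTheory.Integrable.conj' {f : G → ℂ} (hf : Integrable f μ) :
    Integrable (fun g => (starRingEnd ℂ) (f g)) μ := by
  refine ⟨continuous_star.comp_aestronglyMeasurable hf.1, ?_⟩
  have := hf.2
  simpa [HasFiniteIntegral] using this

end Aux

section Aux2

variable {G : Type} [Group G] [TopologicalSpace G] [IsTopologicalGroup G]
  [CompactSpace G] [T2Space G] [MeasurableSpace G] [BorelSpace G]
  (μ : Measure G) [μ.IsHaarMeasure] [IsProbabilityMeasure μ]

lemma haar_isMulRightInvariant : μ.IsMulRightInvariant := by
  constructor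
  intro g
  have hcont : Continuous ⇑((MulAut.conj g⁻¹).toMonoidHom) := by
    simp only [MulAut.conj, MulEquiv.toMonoidHom_eq_coe]
    exact ((continuous_const.mul continuous_id).mul continuous_const)
  have hmap : μ.map ⇑((MulAut.conj g⁻¹).toMonoidHom) = μ := by
    haveI : (μ.map ⇑((MulAut.conj g⁻¹).toMonoidHom)).IsHaarMeasure :=
      Measure.isHaarMeasure_map_of_isFiniteMeasure μ (MulAut.conj g⁻¹).toMonoidHom hcont
        (MulAut.conj g⁻¹).surjective
    haveI : IsProbabilityMeasure (μ.map ⇑((MulAut.conj g⁻¹).toMonoidHom)) :=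
      Measure.isProbabilityMeasure_map hcont.measurable.aemeasurable
    exact MeasureTheory.Measure.isHaarMeasure_eq_of_isProbabilityMeasure _ μ
  have hcomp : (fun x : G => x * g) = ⇑((MulAut.conj g⁻¹).toMonoidHom) ∘ (fun x => g * x) := by
    funext x
    simp [MulAut.conj, mul_assoc]
  rw [hcomp, ← Measure.map_map hcont.measurable (measurable_const_mul g),
    MeasureTheory.map_mul_left_eq_self, hmap]


variable {μ}

/-- Translation formula for Fourier coefficients. -/
lemma fourier_translate {f : G → ℂ} (hf : Integrable f μ) {n : ℕ} (D : UnitaryRep G n)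
    (g : G) (i j : Fin n) :
    ∫ u, f (g * u) * (D.toFun u)ᴴ i j ∂μ = (repFourierCoeff μ f D * D.toFun g) i j := by
  have key : ∀ u, f (g * u) * (D.toFun u)ᴴ i j
      = f (g * u) * ((D.toFun (g * u))ᴴ * D.toFun g) i j := by
    intro u
    have h2 : (D.toFun (g * u))ᴴ * D.toFun g = (D.toFun u)ᴴ := by
      rw [D.map_mul', Matrix.conjTranspose_mul, mul_assoc, D.star_mul_self, mul_one]
    rw [h2]
  simp_rw [key]
  rw [MeasureTheory.integral_mul_left_eq_self (fun v => f v * ((D.toFun v)ᴴ * D.toFun g) i j) g]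
  simp_rw [Matrix.mul_apply, Finset.mul_sum]
  rw [MeasureTheory.integral_finset_sum]
  · refine Finset.sum_congr rfl fun l _ => ?_
    have : ∀ v, f v * ((D.toFun v)ᴴ i l * D.toFun g l j)
        = (f v * (D.toFun v)ᴴ i l) * D.toFun g l j := fun v => by ring
    simp_rw [this]
    rw [MeasureTheory.integral_mul_const]
    rfl
  · intro l _
    have hc : Continuous fun v => (D.toFun v)ᴴ i l * D.toFun g l j :=
      ((continuous_star.comp (D.entry_continuous l i)).mul continuous_const)
    have hb : ∀ v, ‖(D.toFun v)ᴴ i l * D.toFun g l j‖ ≤ 1 := by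
      intro v
      rw [norm_mul, Matrix.conjTranspose_apply]
      calc ‖star (D.toFun v l i)‖ * ‖D.toFun g l j‖
          ≤ 1 * 1 := by
            apply mul_le_mul _ (D.norm_entry_le_one g l j) (norm_nonneg _) zero_le_one
            rw [norm_star]; exact D.norm_entry_le_one v l i
        _ = 1 := one_mul 1
    exact integrable_mul_bdd hf hc hb

/-- Fourier coefficient of the conjugate pairing. -/
lemma fourier_conj {f : G → ℂ} {n : ℕ} (D : UnitaryRep G n) (i j : Fin n) :
    ∫ g, (starRingEnd ℂ) (f g) * D.toFun g i j ∂μ = (repFourierCoeff μ f D)ᴴ i j := by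
  have hrw : repFourierCoeff μ f D j i = ∫ g, f g * (D.toFun g)ᴴ j i ∂μ := rfl
  calc ∫ g, (starRingEnd ℂ) (f g) * D.toFun g i j ∂μ
      = ∫ g, (starRingEnd ℂ) (f g * (D.toFun g)ᴴ j i) ∂μ := by
        congr 1
        funext g
        rw [_root_.map_mul, Matrix.conjTranspose_apply]
        simp only [starRingEnd_apply, star_star]
    _ = (starRingEnd ℂ) (∫ g, f g * (D.toFun g)ᴴ j i ∂μ) := integral_conj
    _ = (repFourierCoeff μ f D)ᴴ i j := by
        rw [Matrix.conjTranspose_apply, hrw, starRingEnd_apply]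

end Aux2

section Aux3

variable {G : Type} [Group G] [TopologicalSpace G] [IsTopologicalGroup G]
  [CompactSpace G] [T2Space G] [MeasurableSpace G] [BorelSpace G]
  {μ : Measure G} [μ.IsHaarMeasure] [IsProbabilityMeasure μ]

lemma integrable_conj_blockDiag {f : G → ℂ} (hf : Integrable f μ)
    {k : ℕ} {m : Fin k → ℕ} (Dα : ∀ i : Fin k, UnitaryRep G (m i))
    (r s : Σ i : Fin k, Fin (m i)) :
    Integrable (fun g => (starRingEnd ℂ) (f g)
      * Matrix.blockDiagonal' (fun i => (Dα i).toFun g) r s) μ := by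
  obtain ⟨i, a⟩ := r
  obtain ⟨i', b⟩ := s
  by_cases h : i = i'
  · subst h
    simp only [Matrix.blockDiagonal'_apply_eq]
    exact integrable_mul_bdd hf.conj' ((Dα i).entry_continuous a b)
      (fun g => (Dα i).norm_entry_le_one g a b)
  · simp only [Matrix.blockDiagonal'_apply_ne _ _ _ h, mul_zero]
    exact integrable_zero _ _ _

lemma integral_conj_blockDiag {f : G → ℂ}
    {k : ℕ} {m : Fin k → ℕ} (Dα : ∀ i : Fin k, UnitaryRep G (m i))
    (r s : Σ i : Fin k, Fin (m i)) :
    ∫ g, (starRingEnd ℂ) (f g) * Matrix.blockDiagonal' (fun i => (Dα i).toFun g) r s ∂μ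
      = Matrix.blockDiagonal' (fun i => (repFourierCoeff μ f (Dα i))ᴴ) r s := by
  obtain ⟨i, a⟩ := r
  obtain ⟨i', b⟩ := s
  by_cases h : i = i'
  · subst h
    simp only [Matrix.blockDiagonal'_apply_eq]
    exact fourier_conj (Dα i) a b
  · simp only [Matrix.blockDiagonal'_apply_ne _ _ _ h, mul_zero, integral_zero]

/-- A jointly measurable surrogate for `(x, y) ↦ f (x * y)`. -/
lemma exists_mul_surrogate {f : G → ℂ} (hf : Integrable f μ) :
    ∃ F : G × G → ℂ, StronglyMeasurable F ∧
      (∀ x, (fun y => F (x, y)) =ᵐ[μ] fun y => f (x * y)) ∧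
      (∀ y, (fun x => F (x, y)) =ᵐ[μ] fun x => f (x * y)) := by
  classical
  haveI : μ.IsMulRightInvariant := haar_isMulRightInvariant μ
  -- continuous approximations converging a.e. to f
  obtain ⟨ψ, hψae⟩ : ∃ ψ : ℕ → G →ᵇ ℂ,
      ∀ᵐ x ∂μ, Tendsto (fun n => ψ n x) atTop (𝓝 (f x)) := by
    have hmem : MemLp f 1 μ := (memLp_one_iff_integrable).2 hf
    have hφ : ∀ n : ℕ, ∃ φ : G →ᵇ ℂ, eLpNorm (f - ⇑φ) 1 μ ≤ ((n : ℝ≥0∞))⁻¹ := by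
      intro n
      obtain ⟨φ, hφ, -⟩ := hmem.exists_boundedContinuous_eLpNorm_sub_le (ENNReal.one_ne_top)
        (ε := ((n : ℝ≥0∞))⁻¹) (by simp [ENNReal.inv_ne_zero])
      exact ⟨φ, hφ⟩
    choose φ hφ using hφ
    have htm : TendstoInMeasure μ (fun n => ⇑(φ n)) atTop f := by
      apply tendstoInMeasure_of_tendsto_eLpNorm (p := 1) one_ne_zero
        (fun n => (φ n).continuous.aestronglyMeasurable) hf.1
      apply tendsto_of_tendsto_of_tendsto_of_le_of_le (tendsto_const_nhds (x := (0 : ℝ≥0∞)))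
        ENNReal.tendsto_inv_nat_nhds_zero (fun n => zero_le)
      intro n
      show eLpNorm (⇑(φ n) - f) 1 μ ≤ _
      rw [eLpNorm_sub_comm]
      exact hφ n
    obtain ⟨ns, -, hns⟩ := htm.exists_seq_tendsto_ae
    exact ⟨fun n => φ (ns n), hns⟩
  -- the two-variable continuous approximations
  set Ψ : ℕ → G × G → ℂ := fun n z => ψ n (z.1 * z.2) with hΨ
  have hΨc : ∀ n, Continuous (Ψ n) := fun n => (ψ n).continuous.comp continuous_mul
  have hΨm : ∀ n, StronglyMeasurable (Ψ n) := fun n =>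
    HasCompactSupport.stronglyMeasurable_of_prod (hΨc n) (isClosed_tsupport _).isCompact
  set E : Set (G × G) := {z | ∃ c, Tendsto (fun n => Ψ n z) atTop (𝓝 c)} with hE
  have hEm : MeasurableSet E := measurableSet_exists_tendsto fun n => (hΨm n).measurable
  set F : G × G → ℂ := fun z => if z ∈ E then limUnder atTop (fun n => Ψ n z) else 0 with hF
  have hFm : StronglyMeasurable F := by
    refine stronglyMeasurable_of_tendsto (f := fun n => E.indicator (Ψ n)) atTop
      (fun n => (hΨm n).indicator hEm) (tendsto_pi_nhds.2 fun z => ?_)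
    by_cases hz : z ∈ E
    · have hind : (fun i => E.indicator (Ψ i) z) = fun n => Ψ n z :=
        funext fun i => Set.indicator_of_mem hz _
      obtain ⟨c, hc⟩ := id hz
      have h1 : F z = c := by
        simp only [hF]
        rw [if_pos hz]
        exact hc.limUnder_eq
      rw [hind, h1]
      exact hc
    · have hind : (fun i => E.indicator (Ψ i) z) = fun _ => (0 : ℂ) :=
        funext fun i => Set.indicator_of_notMem hz _
      have h1 : F z = 0 := by
        simp only [hF]
        rw [if_neg hz]
      rw [hind, h1]
      exact tendsto_const_nhds
  have key : ∀ z : G × G, Tendsto (fun n => ψ n (z.1 * z.2)) atTop (𝓝 (f (z.1 * z.2))) →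
      F z = f (z.1 * z.2) := by
    intro z hz
    have hzE : z ∈ E := ⟨_, hz⟩
    simp only [hF]
    rw [if_pos hzE]
    exact hz.limUnder_eq
  refine ⟨F, hFm, ?_, ?_⟩
  · intro x
    have h1 : ∀ᵐ y ∂μ, Tendsto (fun n => ψ n (x * y)) atTop (𝓝 (f (x * y))) :=
      (measurePreserving_mul_left μ x).quasiMeasurePreserving.ae hψae
    filter_upwards [h1] with y hy
    exact key (x, y) hy
  · intro y
    have h1 : ∀ᵐ x ∂μ, Tendsto (fun n => ψ n (x * y)) atTop (𝓝 (f (x * y))) :=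
      (measurePreserving_mul_right μ y).quasiMeasurePreserving.ae hψae
    filter_upwards [h1] with x hx
    exact key (x, y) hx

end Aux3

/-- **Lemma 3.2.3**: the bispectrum of an integrable function on a compact group factors
through the Fourier coefficients, via the Clebsch–Gordan decomposition of the tensor product. -/
theorem bispectrum_eq_of_tensor_decomp {G : Type} [Group G] [TopologicalSpace G]
    [IsTopologicalGroup G] [CompactSpace G] [T2Space G] [MeasurableSpace G] [BorelSpace G]
    (μ : Measure G) [μ.IsHaarMeasure] [IsProbabilityMeasure μ]
    (f : G → ℂ) (hf : Integrable f μ)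
    {nσ nδ : ℕ} (Dσ : UnitaryRep G nσ) (Dδ : UnitaryRep G nδ)
    {k : ℕ} {m : Fin k → ℕ} (Dα : ∀ i : Fin k, UnitaryRep G (m i))
    (C : Matrix (Fin nσ × Fin nδ) (Σ i : Fin k, Fin (m i)) ℂ)
    (hC1 : C * Cᴴ = 1) (hC2 : Cᴴ * C = 1)
    (hdec : ∀ g : G, Dσ.toFun g ⊗ₖ Dδ.toFun g =
      C * Matrix.blockDiagonal' (fun i => (Dα i).toFun g) * Cᴴ) :
    bispectrum μ f Dσ Dδ =
      (repFourierCoeff μ f Dσ ⊗ₖ repFourierCoeff μ f Dδ) * C *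
        Matrix.blockDiagonal' (fun i => (repFourierCoeff μ f (Dα i))ᴴ) * Cᴴ := by
  classical
  haveI : μ.IsMulRightInvariant := haar_isMulRightInvariant μ
  obtain ⟨M, hM, hML, hMR⟩ := exists_mul_surrogate hf
  ext p q
  -- abbreviations
  set Fσ : Matrix (Fin nσ) (Fin nσ) ℂ := repFourierCoeff μ f Dσ with hFσ
  set Fδ : Matrix (Fin nδ) (Fin nδ) ℂ := repFourierCoeff μ f Dδ with hFδ
  set k1 : G → ℂ := fun g => (Dσ.toFun g)ᴴ p.1 q.1 with hk1
  set k2 : G → ℂ := fun g => (Dδ.toFun g)ᴴ p.2 q.2 with hk2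
  have hk1c : Continuous k1 := continuous_star.comp (Dσ.entry_continuous q.1 p.1)
  have hk2c : Continuous k2 := continuous_star.comp (Dδ.entry_continuous q.2 p.2)
  have hk1b : ∀ g, ‖k1 g‖ ≤ 1 := fun g => by
    rw [hk1]
    simp only [Matrix.conjTranspose_apply, norm_star]
    exact Dσ.norm_entry_le_one g q.1 p.1
  have hk2b : ∀ g, ‖k2 g‖ ≤ 1 := fun g => by
    rw [hk2]
    simp only [Matrix.conjTranspose_apply, norm_star]
    exact Dδ.norm_entry_le_one g q.2 p.2
  set V : G × (G × G) → ℂ := fun z =>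
    (starRingEnd ℂ) (f z.1) * ((M (z.1, z.2.1) * k1 z.2.1) * (M (z.1, z.2.2) * k2 z.2.2)) with hV
  -- slice integrability
  have hsliceGen : ∀ (x : G) (kk : G → ℂ), Continuous kk → (∀ g, ‖kk g‖ ≤ 1) →
      Integrable (fun y => M (x, y) * kk y) μ := by
    intro x kk hkc hkb
    refine (integrable_mul_bdd (hf.comp_mul_left x) hkc hkb).congr ?_
    filter_upwards [hML x] with y hy
    rw [hy]
  have hslice1 : ∀ x : G, Integrable (fun y => M (x, y) * k1 y) μ :=
    fun x => hsliceGen x k1 hk1c hk1b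
  have hslice2 : ∀ x : G, Integrable (fun y => M (x, y) * k2 y) μ :=
    fun x => hsliceGen x k2 hk2c hk2b
  -- measurability of V
  have haesm : AEStronglyMeasurable V (μ.prod (μ.prod μ)) := by
    have h1 : AEStronglyMeasurable (fun z : G × (G × G) => (starRingEnd ℂ) (f z.1))
        (μ.prod (μ.prod μ)) :=
      continuous_star.comp_aestronglyMeasurable
        (hf.1.comp_quasiMeasurePreserving Measure.quasiMeasurePreserving_fst)
    have h2 : AEStronglyMeasurable (fun z : G × (G × G) => M (z.1, z.2.1)) (μ.prod (μ.prod μ)) :=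
      (hM.comp_measurable (measurable_fst.prodMk (measurable_fst.comp measurable_snd))).aestronglyMeasurable
    have h3 : AEStronglyMeasurable (fun z : G × (G × G) => M (z.1, z.2.2)) (μ.prod (μ.prod μ)) :=
      (hM.comp_measurable (measurable_fst.prodMk (measurable_snd.comp measurable_snd))).aestronglyMeasurable
    have h4 : AEStronglyMeasurable (fun z : G × (G × G) => k1 z.2.1) (μ.prod (μ.prod μ)) :=
      (hk1c.stronglyMeasurable.comp_measurable (measurable_fst.comp measurable_snd)).aestronglyMeasurable
    have h5 : AEStronglyMeasurable (fun z : G × (G × G) => k2 z.2.2) (μ.prod (μ.prod μ)) :=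
      (hk2c.stronglyMeasurable.comp_measurable (measurable_snd.comp measurable_snd)).aestronglyMeasurable
    exact h1.mul ((h2.mul h4).mul (h3.mul h5))
  -- norm bound
  set B : ℝ := ∫ y, ‖f y‖ ∂μ with hB
  have hB0 : 0 ≤ B := integral_nonneg fun y => norm_nonneg _
  have hnormint : ∀ (x : G) (kk : G → ℂ), Continuous kk → (∀ g, ‖kk g‖ ≤ 1) →
      (∫ y, ‖M (x, y) * kk y‖ ∂μ) ≤ B := by
    intro x kk hkc hkb
    have h1 : (∫ y, ‖M (x, y) * kk y‖ ∂μ) = ∫ y, ‖f (x * y) * kk y‖ ∂μ := by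
      apply integral_congr_ae
      filter_upwards [hML x] with y hy
      rw [hy]
    have h2 : (∫ y, ‖f (x * y) * kk y‖ ∂μ) ≤ ∫ y, ‖f (x * y)‖ ∂μ := by
      apply integral_mono_of_nonneg (Eventually.of_forall fun y => norm_nonneg _)
        (hf.comp_mul_left x).norm
      refine Eventually.of_forall fun y => ?_
      show ‖f (x * y) * kk y‖ ≤ ‖f (x * y)‖
      rw [norm_mul]
      calc ‖f (x * y)‖ * ‖kk y‖ ≤ ‖f (x * y)‖ * 1 :=
            mul_le_mul_of_nonneg_left (hkb y) (norm_nonneg _)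
        _ = ‖f (x * y)‖ := mul_one _
    have h3 : (∫ y, ‖f (x * y)‖ ∂μ) = B :=
      MeasureTheory.integral_mul_left_eq_self (fun y => ‖f y‖) x
    linarith
  -- integrability of V
  have hVint : Integrable V (μ.prod (μ.prod μ)) := by
    refine (integrable_prod_iff haesm).2 ⟨Eventually.of_forall fun x => ?_, ?_⟩
    · exact ((hslice1 x).mul_prod (hslice2 x)).const_mul ((starRingEnd ℂ) (f x))
    · apply Integrable.mono' (hf.norm.mul_const (B * B)) haesm.norm.integral_prod_right'
      refine Eventually.of_forall fun x => ?_
      have hnn : 0 ≤ ∫ z, ‖V (x, z)‖ ∂(μ.prod μ) := integral_nonneg fun z => norm_nonneg _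
      rw [Real.norm_of_nonneg hnn]
      have heq : (∫ z, ‖V (x, z)‖ ∂(μ.prod μ))
          = ‖f x‖ * ((∫ y, ‖M (x, y) * k1 y‖ ∂μ) * (∫ y, ‖M (x, y) * k2 y‖ ∂μ)) := by
        have hpt : ∀ z : G × G, ‖V (x, z)‖
            = ‖f x‖ * (‖M (x, z.1) * k1 z.1‖ * ‖M (x, z.2) * k2 z.2‖) := by
          intro z
          show ‖(starRingEnd ℂ) (f x) * ((M (x, z.1) * k1 z.1) * (M (x, z.2) * k2 z.2))‖ = _
          rw [norm_mul, norm_mul, RCLike.norm_conj]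
        simp_rw [hpt]
        rw [MeasureTheory.integral_const_mul]
        congr 1
        exact integral_prod_mul (fun y => ‖M (x, y) * k1 y‖) (fun y => ‖M (x, y) * k2 y‖)
      rw [heq]
      have b1 := hnormint x k1 hk1c hk1b
      have b2 := hnormint x k2 hk2c hk2b
      have nn1 : 0 ≤ ∫ y, ‖M (x, y) * k1 y‖ ∂μ := integral_nonneg fun y => norm_nonneg _
      have nn2 : 0 ≤ ∫ y, ‖M (x, y) * k2 y‖ ∂μ := integral_nonneg fun y => norm_nonneg _
      exact mul_le_mul_of_nonneg_left (mul_le_mul b1 b2 nn2 hB0) (norm_nonneg _)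
  have hVswap : Integrable (V ∘ Prod.swap) ((μ.prod μ).prod μ) := hVint.swap
  have hQint : Integrable (fun z : G × G => ∫ g, V (g, z) ∂μ) (μ.prod μ) :=
    hVswap.integral_prod_left
  -- pointwise identification of the inner integral
  have step1 : ∀ g₁ g₂ : G,
      tripleCorr μ f (g₁, g₂) * ((Dσ.toFun g₁)ᴴ ⊗ₖ (Dδ.toFun g₂)ᴴ) p q
        = ∫ g, V (g, (g₁, g₂)) ∂μ := by
    intro g₁ g₂
    have hkron : ((Dσ.toFun g₁)ᴴ ⊗ₖ (Dδ.toFun g₂)ᴴ) p q = k1 g₁ * k2 g₂ := rfl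
    rw [hkron]
    show (∫ g, (starRingEnd ℂ) (f g) * f (g * g₁) * f (g * g₂) ∂μ) * (k1 g₁ * k2 g₂) = _
    rw [← MeasureTheory.integral_mul_const]
    apply integral_congr_ae
    filter_upwards [hMR g₁, hMR g₂] with g h1 h2
    show (starRingEnd ℂ) (f g) * f (g * g₁) * f (g * g₂) * (k1 g₁ * k2 g₂)
        = (starRingEnd ℂ) (f g) * ((M (g, g₁) * k1 g₁) * (M (g, g₂) * k2 g₂))
    rw [h1, h2]
    ring
  -- the final algebraic identity, pointwise in g
  set X : Matrix (Fin nσ × Fin nδ) (Σ i : Fin k, Fin (m i)) ℂ := (Fσ ⊗ₖ Fδ) * C with hX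
  set BDF : Matrix (Σ i : Fin k, Fin (m i)) (Σ i : Fin k, Fin (m i)) ℂ :=
    Matrix.blockDiagonal' (fun i => (repFourierCoeff μ f (Dα i))ᴴ) with hBDF
  have halg : ∀ g : G,
      (Fσ * Dσ.toFun g) p.1 q.1 * (Fδ * Dδ.toFun g) p.2 q.2
        = (X * Matrix.blockDiagonal' (fun i => (Dα i).toFun g) * Cᴴ) p q := by
    intro g
    have h1 : (Fσ * Dσ.toFun g) p.1 q.1 * (Fδ * Dδ.toFun g) p.2 q.2
        = ((Fσ * Dσ.toFun g) ⊗ₖ (Fδ * Dδ.toFun g)) p q := rfl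
    rw [h1, Matrix.mul_kronecker_mul, hdec g, hX]
    simp only [Matrix.mul_assoc]
  -- main computation
  show (∫ g₁, ∫ g₂, tripleCorr μ f (g₁, g₂) * ((Dσ.toFun g₁)ᴴ ⊗ₖ (Dδ.toFun g₂)ᴴ) p q ∂μ ∂μ)
      = (X * BDF * Cᴴ) p q
  calc (∫ g₁, ∫ g₂, tripleCorr μ f (g₁, g₂) * ((Dσ.toFun g₁)ᴴ ⊗ₖ (Dδ.toFun g₂)ᴴ) p q ∂μ ∂μ)
      = ∫ g₁, ∫ g₂, (∫ g, V (g, (g₁, g₂)) ∂μ) ∂μ ∂μ := by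
        apply integral_congr_ae
        refine Eventually.of_forall fun g₁ => ?_
        apply integral_congr_ae
        exact Eventually.of_forall fun g₂ => step1 g₁ g₂
    _ = ∫ z : G × G, (∫ g, V (g, z) ∂μ) ∂(μ.prod μ) :=
        (integral_prod _ hQint).symm
    _ = ∫ g, ∫ z : G × G, V (g, z) ∂(μ.prod μ) ∂μ :=
        integral_integral_swap hVswap
    _ = ∫ g, (starRingEnd ℂ) (f g)
          * ((Fσ * Dσ.toFun g) p.1 q.1 * (Fδ * Dδ.toFun g) p.2 q.2) ∂μ := by
        apply integral_congr_ae
        refine Eventually.of_forall fun g => ?_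
        show (∫ z : G × G,
            (starRingEnd ℂ) (f g) * ((M (g, z.1) * k1 z.1) * (M (g, z.2) * k2 z.2)) ∂(μ.prod μ))
          = (starRingEnd ℂ) (f g) * ((Fσ * Dσ.toFun g) p.1 q.1 * (Fδ * Dδ.toFun g) p.2 q.2)
        rw [MeasureTheory.integral_const_mul]
        congr 1
        have hmul : (∫ z : G × G, (M (g, z.1) * k1 z.1) * (M (g, z.2) * k2 z.2) ∂(μ.prod μ))
            = (∫ y, M (g, y) * k1 y ∂μ) * (∫ y, M (g, y) * k2 y ∂μ) :=
          integral_prod_mul (fun y => M (g, y) * k1 y) (fun y => M (g, y) * k2 y)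
        rw [hmul]
        have e1 : (∫ y, M (g, y) * k1 y ∂μ) = ∫ y, f (g * y) * k1 y ∂μ := by
          apply integral_congr_ae
          filter_upwards [hML g] with y hy
          rw [hy]
        have e2 : (∫ y, M (g, y) * k2 y ∂μ) = ∫ y, f (g * y) * k2 y ∂μ := by
          apply integral_congr_ae
          filter_upwards [hML g] with y hy
          rw [hy]
        rw [e1, e2, hk1, hk2]
        rw [fourier_translate hf Dσ g p.1 q.1, fourier_translate hf Dδ g p.2 q.2]
    _ = ∫ g, ∑ s : Σ i : Fin k, Fin (m i), ∑ r : Σ i : Fin k, Fin (m i),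
          X p r * (((starRingEnd ℂ) (f g)
            * Matrix.blockDiagonal' (fun i => (Dα i).toFun g) r s) * Cᴴ s q) ∂μ := by
        apply integral_congr_ae
        refine Eventually.of_forall fun g => ?_
        show (starRingEnd ℂ) (f g) * ((Fσ * Dσ.toFun g) p.1 q.1 * (Fδ * Dδ.toFun g) p.2 q.2)
          = ∑ s : Σ i : Fin k, Fin (m i), ∑ r : Σ i : Fin k, Fin (m i),
              X p r * (((starRingEnd ℂ) (f g)
                * Matrix.blockDiagonal' (fun i => (Dα i).toFun g) r s) * Cᴴ s q)
        rw [halg g, Matrix.mul_apply, Finset.mul_sum]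
        refine Finset.sum_congr rfl fun s _ => ?_
        rw [Matrix.mul_apply, Finset.sum_mul, Finset.mul_sum]
        refine Finset.sum_congr rfl fun r _ => ?_
        ring
    _ = ∑ s : Σ i : Fin k, Fin (m i), ∑ r : Σ i : Fin k, Fin (m i),
          X p r * ((∫ g, (starRingEnd ℂ) (f g)
            * Matrix.blockDiagonal' (fun i => (Dα i).toFun g) r s ∂μ) * Cᴴ s q) := by
        rw [MeasureTheory.integral_finset_sum]
        · refine Finset.sum_congr rfl fun s _ => ?_
          rw [MeasureTheory.integral_finset_sum]
          · refine Finset.sum_congr rfl fun r _ => ?_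
            rw [MeasureTheory.integral_const_mul, MeasureTheory.integral_mul_const]
          · intro r _
            exact (((integrable_conj_blockDiag hf Dα r s).mul_const _).const_mul _)
        · intro s _
          apply integrable_finset_sum
          intro r _
          exact (((integrable_conj_blockDiag hf Dα r s).mul_const _).const_mul _)
    _ = (X * BDF * Cᴴ) p q := by
        rw [Matrix.mul_apply]
        refine Finset.sum_congr rfl fun s _ => ?_
        rw [Matrix.mul_apply, Finset.sum_mul]
        refine Finset.sum_congr rfl fun r _ => ?_
        rw [integral_conj_blockDiag Dα r s, hBDF]
        ring
end

section
/- Let f ∈ L¹(SU(2)) be real-valued and let F(1) = ∫_{SU(2)} f(g) g† dg be the Fourier coefficient of f at the self-representation g ↦ g of SU(2). Then det F(1) is a real number and det F(1) ≥ 0. -/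
open MeasureTheory Matrix
open scoped Kronecker

/-- The special unitary group `SU(2)`, as a subgroup of the `2 × 2` unitary group. -/
def SU2 : Subgroup ↥(Matrix.unitaryGroup (Fin 2) ℂ) where
  carrier := {A | ((A : Matrix (Fin 2) (Fin 2) ℂ)).det = 1}
  one_mem' := by simp
  mul_mem' := by
    intro a b ha hb
    simp only [Set.mem_setOf_eq] at *
    simp [Matrix.UnitaryGroup.mul_val, Matrix.det_mul, ha, hb]
  inv_mem' := by
    intro a ha
    simp only [Set.mem_setOf_eq] at *
    simp [Matrix.UnitaryGroup.inv_val, Matrix.star_eq_conjTranspose,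
      Matrix.det_conjTranspose, ha]

lemma su2_conjTranspose_eq_adjugate (A : Matrix (Fin 2) (Fin 2) ℂ)
    (h : A ∈ Matrix.unitaryGroup (Fin 2) ℂ) (hd : A.det = 1) : Aᴴ = A.adjugate := by
  have h1 : A * Aᴴ = 1 := by
    have := (Matrix.mem_unitaryGroup_iff).mp h
    simpa [Matrix.star_eq_conjTranspose] using this
  have h2 : Aᴴ = A⁻¹ := (Matrix.inv_eq_right_inv h1).symm
  rw [h2, Matrix.inv_def, hd]
  simp

/-- For a real-valued `f ∈ L¹(SU(2))`, the determinant of the Fourier coefficient of `f` at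
the self-representation `g ↦ g` is a nonnegative real number. -/
theorem su2_det_selfRep_fourierCoeff_nonneg
    [IsTopologicalGroup ↥SU2] [CompactSpace ↥SU2] [T2Space ↥SU2]
    [MeasurableSpace ↥SU2] [BorelSpace ↥SU2]
    (μ : Measure ↥SU2) [μ.IsHaarMeasure] [IsProbabilityMeasure μ]
    (f : ↥SU2 → ℂ) (hf : Integrable f μ) (hfreal : ∀ g, (f g).im = 0) :
    ((Matrix.of fun i j =>
        ∫ g : ↥SU2, f g *
          (((g : ↥(Matrix.unitaryGroup (Fin 2) ℂ)) : Matrix (Fin 2) (Fin 2) ℂ))ᴴ i j ∂μ :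
      Matrix (Fin 2) (Fin 2) ℂ)).det.im = 0 ∧
    0 ≤ ((Matrix.of fun i j =>
        ∫ g : ↥SU2, f g *
          (((g : ↥(Matrix.unitaryGroup (Fin 2) ℂ)) : Matrix (Fin 2) (Fin 2) ℂ))ᴴ i j ∂μ :
      Matrix (Fin 2) (Fin 2) ℂ)).det.re := by
  set A : Matrix (Fin 2) (Fin 2) ℂ := (Matrix.of fun i j =>
        ∫ g : ↥SU2, f g *
          (((g : ↥(Matrix.unitaryGroup (Fin 2) ℂ)) : Matrix (Fin 2) (Fin 2) ℂ))ᴴ i j ∂μ :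
      Matrix (Fin 2) (Fin 2) ℂ) with hA
  set M : ↥SU2 → Matrix (Fin 2) (Fin 2) ℂ :=
    fun g => ((g : ↥(Matrix.unitaryGroup (Fin 2) ℂ)) : Matrix (Fin 2) (Fin 2) ℂ) with hM
  have hadj : ∀ g : ↥SU2, (M g)ᴴ = (M g).adjugate := fun g =>
    su2_conjTranspose_eq_adjugate (M g) (g : ↥(Matrix.unitaryGroup (Fin 2) ℂ)).2 g.2
  have hconjf : ∀ g, (starRingEnd ℂ) (f g) = f g := fun g =>
    Complex.conj_eq_iff_im.mpr (hfreal g)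
  have hent : ∀ (g : ↥SU2) (i j : Fin 2), (M g)ᴴ i j = star (M g j i) := fun g i j =>
    Matrix.conjTranspose_apply _ _ _
  -- entry identities from adjugate
  have e00 : ∀ g : ↥SU2, (M g)ᴴ 0 0 = M g 1 1 := by
    intro g; rw [hadj g]; simp [Matrix.adjugate_fin_two]
  have e11 : ∀ g : ↥SU2, (M g)ᴴ 1 1 = M g 0 0 := by
    intro g; rw [hadj g]; simp [Matrix.adjugate_fin_two]
  have e10 : ∀ g : ↥SU2, (M g)ᴴ 1 0 = -(M g 1 0) := by
    intro g; rw [hadj g]; simp [Matrix.adjugate_fin_two]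
  have e01 : ∀ g : ↥SU2, (M g)ᴴ 0 1 = -(M g 0 1) := by
    intro g; rw [hadj g]; simp [Matrix.adjugate_fin_two]
  have h1 : A 0 0 = (starRingEnd ℂ) (A 1 1) := by
    have : (starRingEnd ℂ) (A 1 1) = ∫ g, (starRingEnd ℂ) (f g * (M g)ᴴ 1 1) ∂μ := by
      rw [integral_conj]; rfl
    rw [this]
    have : ∀ g : ↥SU2, (starRingEnd ℂ) (f g * (M g)ᴴ 1 1) = f g * (M g)ᴴ 0 0 := by
      intro g
      rw [_root_.map_mul, hconjf, e11, e00]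
      congr 1
      have := hent g 0 0
      rw [e00] at this
      exact this.symm
    simp only [this]
    rfl
  have h2 : A 0 1 = -((starRingEnd ℂ) (A 1 0)) := by
    have hc : (starRingEnd ℂ) (A 1 0) = ∫ g, (starRingEnd ℂ) (f g * (M g)ᴴ 1 0) ∂μ := by
      rw [integral_conj]; rfl
    have hpt : ∀ g : ↥SU2, (starRingEnd ℂ) (f g * (M g)ᴴ 1 0) = -(f g * (M g)ᴴ 0 1) := by
      intro g
      rw [_root_.map_mul, hconjf]
      have hh : (starRingEnd ℂ) ((M g)ᴴ 1 0) = -((M g)ᴴ 0 1) := by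
        rw [hent g 1 0, e01]
        simp
      rw [hh]
      ring
    rw [hc]
    simp only [hpt]
    rw [integral_neg]
    simp
    rfl
  have hdet : A.det = A 0 0 * A 1 1 - A 0 1 * A 1 0 := Matrix.det_fin_two A
  rw [hdet, h1, h2]
  set z := A 1 1
  set w := A 1 0
  have : (starRingEnd ℂ) z * z - -((starRingEnd ℂ) w) * w
      = ((Complex.normSq z + Complex.normSq w : ℝ) : ℂ) := by
    rw [neg_mul, sub_neg_eq_add, mul_comm ((starRingEnd ℂ) z) z,
      mul_comm ((starRingEnd ℂ) w) w, Complex.mul_conj, Complex.mul_conj]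
    push_cast
    ring
  rw [this]
  constructor
  · simp
  · have hz := Complex.normSq_nonneg z
    have hw := Complex.normSq_nonneg w
    simp only [Complex.ofReal_re]
    linarith
end
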